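/- Let σ = conv{σ_0,...,σ_k} and τ = conv{τ_0,...,τ_ℓ} be affine simplices in ℝ^m of complementary dimensions k + ℓ = m with all vertices in general position, intersecting at a point p = φ_σ(α) = φ_τ(β), where φ_σ(u) = σ_0 + Σ u_i(σ_i − σ_0) and φ_τ(v) = τ_0 + Σ v_j(τ_j − τ_0). Then sgn det((1,p),(1,σ_1),...,(1,σ_k),(1,τ_1),...,(1,τ_ℓ)) = sgn det(σ_1−σ_0, ..., σ_k−σ_0, τ_1−τ_0, ..., τ_ℓ−τ_0), i.e., the combinatorial intersection number equals the differential-geometric index of intersection of the parametrizations. -/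

import Mathlib

open Matrix

private lemma sign_mul_pos' (x c : ℝ) (hc : 0 < c) : Real.sign (x * c) = Real.sign x := by
  rcases lt_trichotomy x 0 with h|h|h
  · rw [Real.sign_of_neg h, Real.sign_of_neg (mul_neg_of_neg_of_pos h hc)]
  · simp [h]
  · rw [Real.sign_of_pos h, Real.sign_of_pos (mul_pos h hc)]

private def Bm {n : ℕ} (w : Fin n → ℝ) : Matrix (Fin n) (Fin n) ℝ :=
  Matrix.of fun c j => (if c = j then (1:ℝ) else 0) - w c

private lemma Bm_det {n : ℕ} (w : Fin n → ℝ) : (Bm w).det = 1 - ∑ i, w i := by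
  have h : Bm w = 1 + Matrix.replicateCol (Fin 1) (fun c => -w c) * Matrix.replicateRow (Fin 1) (fun _ => (1:ℝ)) := by
    ext c j
    simp [Bm, Matrix.mul_apply, Matrix.one_apply, Matrix.replicateCol_apply, Matrix.replicateRow_apply,
      sub_eq_add_neg, Fin.sum_univ_one]
  rw [h]; erw [det_one_add_replicateCol_mul_replicateRow]
  simp [dotProduct, sub_eq_add_neg, Finset.sum_neg_distrib]

private def Um (n : ℕ) : Matrix (Fin (n+1)) (Fin (n+1)) ℝ :=
  Matrix.of fun c j => (if c = j then (1:ℝ) else 0) + (if c = 0 ∧ j ≠ 0 then 1 else 0)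

private lemma Um_det (n : ℕ) : (Um n).det = 1 := by
  rw [det_of_upperTriangular]
  · simp [Um, Matrix.BlockTriangular]
  · intro i j hij
    simp only [Um, Matrix.of_apply]
    rw [if_neg, if_neg]
    · ring
    · rintro ⟨h0, hj⟩; exact absurd (h0 ▸ hij) (Fin.not_lt_zero j)
    · rintro rfl; exact absurd hij (lt_irrefl _)

private def Cm (k l : ℕ) (σv : Fin (k+1) → Fin (k+l) → ℝ) (τv : Fin (l+1) → Fin (k+l) → ℝ)
    (p : Fin (k+l) → ℝ) : Matrix (Fin (k+l)) (Fin (k+l)) ℝ :=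
  Matrix.of fun r c =>
    (if hc : (c:ℕ) < k then σv (⟨(c:ℕ), hc⟩ : Fin k).succ - p
     else τv (⟨(c:ℕ) - k, by have := c.isLt; omega⟩ : Fin l).succ - p) r

private def Dm (k l : ℕ) (σv : Fin (k+1) → Fin (k+l) → ℝ) (τv : Fin (l+1) → Fin (k+l) → ℝ)
    (p : Fin (k+l) → ℝ) : Matrix (Fin (k+l+1)) (Fin (k+l+1)) ℝ :=
  Matrix.of fun i j =>
    ((if h0 : (j:ℕ) = 0 then Fin.cons (1:ℝ) p
     else Fin.cons (0:ℝ)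
       (fun r => Cm k l σv τv p r (⟨(j:ℕ) - 1, by have := j.isLt; omega⟩ : Fin (k+l)))
      : Fin (k+l+1) → ℝ)) i

private lemma Dm_det (k l : ℕ) (σv : Fin (k+1) → Fin (k+l) → ℝ) (τv : Fin (l+1) → Fin (k+l) → ℝ)
    (p : Fin (k+l) → ℝ) : (Dm k l σv τv p).det = (Cm k l σv τv p).det := by
  rw [Matrix.det_succ_row_zero]
  rw [Finset.sum_eq_single (0 : Fin (k+l+1))]
  · have h00 : Dm k l σv τv p 0 0 = 1 := by simp [Dm]
    rw [h00]
    simp only [Fin.val_zero, pow_zero, one_mul, Fin.succAbove_zero]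
    have hsub : (Dm k l σv τv p).submatrix Fin.succ Fin.succ = Cm k l σv τv p := by
      ext r c
      simp only [Matrix.submatrix_apply, Dm, Matrix.of_apply]
      rw [dif_neg (by simp), Fin.cons_succ]
      congr 1
    rw [hsub]
  · intro j _ hj
    have : Dm k l σv τv p 0 j = 0 := by
      simp only [Dm, Matrix.of_apply]
      rw [dif_neg (by simpa using hj)]
      simp
    rw [this]; ring
  · intro h; exact absurd (Finset.mem_univ _) h

/-- If two simplices `σ`, `τ` of complementary dimensions `k + ℓ = m` intersect
at a point `p = φ_σ(α) = φ_τ(β)` given by parameters `α`, `β` in the (interior of the)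
standard simplices, then the sign of the combinatorial determinant
`det((1,p),(1,σ_1),…,(1,σ_k),(1,τ_1),…,(1,τ_ℓ))` equals the sign of the differential-geometric
determinant `det(σ_1−σ_0,…,σ_k−σ_0,τ_1−τ_0,…,τ_ℓ−τ_0)`. -/
theorem stmt12 (m k l : ℕ) (hkl : k + l = m)
    (σv : Fin (k + 1) → Fin m → ℝ) (τv : Fin (l + 1) → Fin m → ℝ)
    (a : Fin k → ℝ) (b : Fin l → ℝ)
    (ha : ∀ i, 0 ≤ a i) (ha1 : ∑ i, a i < 1)
    (hb : ∀ j, 0 ≤ b j) (hb1 : ∑ j, b j < 1)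
    (p : Fin m → ℝ)
    (hp1 : p = σv 0 + ∑ i : Fin k, a i • (σv i.succ - σv 0))
    (hp2 : p = τv 0 + ∑ j : Fin l, b j • (τv j.succ - τv 0)) :
    Real.sign (Matrix.det (Matrix.of fun (i j : Fin (m + 1)) =>
      (if (j : ℕ) = 0 then Fin.cons (1 : ℝ) p
       else if hj : (j : ℕ) < k + 1 then Fin.cons (1 : ℝ) (σv ⟨(j : ℕ), hj⟩)
       else Fin.cons (1 : ℝ) (τv ⟨(j : ℕ) - k, by have := j.isLt; omega⟩) :
         Fin (m + 1) → ℝ) i))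
    = Real.sign (Matrix.det (Matrix.of fun (i j : Fin m) =>
      (if hj : (j : ℕ) < k then σv (⟨(j : ℕ), hj⟩ : Fin k).succ - σv 0
       else τv (⟨(j : ℕ) - k, by have := j.isLt; omega⟩ : Fin l).succ - τv 0 :
         Fin m → ℝ) i)) := by
  subst hkl
  set Small : Matrix (Fin (k+l)) (Fin (k+l)) ℝ := Matrix.of fun (i j : Fin (k+l)) =>
      (if hj : (j : ℕ) < k then σv (⟨(j : ℕ), hj⟩ : Fin k).succ - σv 0
       else τv (⟨(j : ℕ) - k, by have := j.isLt; omega⟩ : Fin l).succ - τv 0 :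
         Fin (k+l) → ℝ) i with hSmall
  set Big : Matrix (Fin (k+l+1)) (Fin (k+l+1)) ℝ := Matrix.of fun (i j : Fin (k+l+1)) =>
      (if (j : ℕ) = 0 then Fin.cons (1 : ℝ) p
       else if hj : (j : ℕ) < k + 1 then Fin.cons (1 : ℝ) (σv ⟨(j : ℕ), hj⟩)
       else Fin.cons (1 : ℝ) (τv ⟨(j : ℕ) - k, by have := j.isLt; omega⟩) :
         Fin (k+l+1) → ℝ) i with hBig
  -- pointwise forms of hp1, hp2
  have hsum1 : ∀ r, p r = σv 0 r + ∑ c : Fin k, a c * (σv c.succ r - σv 0 r) := by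
    intro r
    rw [hp1]
    simp [Finset.sum_apply]
  have hsum2 : ∀ r, p r = τv 0 r + ∑ c : Fin l, b c * (τv c.succ r - τv 0 r) := by
    intro r
    rw [hp2]
    simp [Finset.sum_apply]
  -- Step A : Big = Dm * Um
  have hBD : Big = Dm k l σv τv p * Um (k+l) := by
    ext i j
    rw [Matrix.mul_apply]
    have expand : ∀ c : Fin (k+l+1), Dm k l σv τv p i c * Um (k+l) c j =
        (if c = j then Dm k l σv τv p i c else 0) +
        (if c = 0 then (if j ≠ 0 then Dm k l σv τv p i c else 0) else 0) := by
      intro c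
      simp only [Um, Matrix.of_apply]
      split_ifs <;> simp_all <;> ring
    rw [Finset.sum_congr rfl (fun c _ => expand c), Finset.sum_add_distrib,
      Finset.sum_ite_eq' Finset.univ j, Finset.sum_ite_eq' Finset.univ (0 : Fin (k+l+1))]
    simp only [Finset.mem_univ, if_true]
    by_cases hj0 : j = 0
    · subst hj0
      simp only [ne_eq, not_true_eq_false, if_false, add_zero]
      simp [Big, Dm]
    · rw [if_pos hj0]
      have hD0 : Dm k l σv τv p i 0 = (Fin.cons (1:ℝ) p : Fin (k+l+1) → ℝ) i := by simp [Dm]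
      have hjv : (j:ℕ) ≠ 0 := by simpa using hj0
      have hDj : Dm k l σv τv p i j =
          (Fin.cons (0:ℝ) (fun r => Cm k l σv τv p r ⟨(j:ℕ)-1, by have := j.isLt; omega⟩)
            : Fin (k+l+1) → ℝ) i := by
        simp only [Dm, Matrix.of_apply]
        rw [dif_neg hjv]
      rw [hD0, hDj]
      simp only [Big, Matrix.of_apply]
      rw [if_neg hjv]
      induction i using Fin.cases with
      | zero =>
        by_cases hjk : (j:ℕ) < k + 1 <;> simp [hjk]
      | succ r =>
        simp only [Fin.cons_succ]
        by_cases hjk : (j:ℕ) < k + 1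
        · rw [dif_pos hjk]
          have hck : ((j:ℕ) - 1) < k := by omega
          simp only [Cm, Matrix.of_apply]
          rw [dif_pos hck]
          have : (⟨(j:ℕ)-1, hck⟩ : Fin k).succ = ⟨(j:ℕ), hjk⟩ := by
            ext; simp; omega
          rw [this]
          simp
        · rw [dif_neg hjk]
          have hck : ¬ ((j:ℕ) - 1) < k := by omega
          simp only [Cm, Matrix.of_apply]
          rw [dif_neg hck]
          have : (⟨(j:ℕ)-1-k, by have := j.isLt; omega⟩ : Fin l).succ
              = ⟨(j:ℕ)-k, by have := j.isLt; omega⟩ := by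
            ext; simp; omega
          rw [this]
          simp
  -- Step B : det Cm = det Small * ((1 - ∑ a) * (1 - ∑ b))
  have hCB : (Cm k l σv τv p).det = Small.det * ((1 - ∑ i, a i) * (1 - ∑ j, b j)) := by
    rw [← Matrix.det_submatrix_equiv_self finSumFinEquiv (Cm k l σv τv p),
      ← Matrix.det_submatrix_equiv_self finSumFinEquiv Small]
    have hfact : (Cm k l σv τv p).submatrix finSumFinEquiv finSumFinEquiv =
        Small.submatrix finSumFinEquiv finSumFinEquiv *
          Matrix.fromBlocks (Bm a) 0 0 (Bm b) := by
      ext i c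
      rw [Matrix.mul_apply, Fintype.sum_sum_type]
      cases c with
      | inl j =>
        simp only [Matrix.submatrix_apply, Matrix.fromBlocks_apply₁₁, Matrix.fromBlocks_apply₂₁,
          Matrix.zero_apply, mul_zero, Finset.sum_const_zero, add_zero]
        have hX : ∀ d : Fin k, Small (finSumFinEquiv i) (finSumFinEquiv (Sum.inl d)) =
            σv d.succ (finSumFinEquiv i) - σv 0 (finSumFinEquiv i) := by
          intro d
          simp only [Small, finSumFinEquiv_apply_left, Matrix.of_apply]
          rw [dif_pos (by simp [Fin.coe_castAdd, d.isLt] : ((Fin.castAdd l d : Fin (k+l)):ℕ) < k)]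
          congr 2 <;> simp [Fin.ext_iff]
        have hC : Cm k l σv τv p (finSumFinEquiv i) (finSumFinEquiv (Sum.inl j)) =
            σv j.succ (finSumFinEquiv i) - p (finSumFinEquiv i) := by
          simp only [Cm, finSumFinEquiv_apply_left, Matrix.of_apply]
          rw [dif_pos (by simp [Fin.coe_castAdd, j.isLt] : ((Fin.castAdd l j : Fin (k+l)):ℕ) < k)]
          congr 2 <;> simp [Fin.ext_iff]
        rw [hC, Finset.sum_congr rfl (fun d _ => by rw [hX d])]
        have : ∀ d : Fin k,
            (σv d.succ (finSumFinEquiv i) - σv 0 (finSumFinEquiv i)) * Bm a d j =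
            (if d = j then σv d.succ (finSumFinEquiv i) - σv 0 (finSumFinEquiv i) else 0)
              - a d * (σv d.succ (finSumFinEquiv i) - σv 0 (finSumFinEquiv i)) := by
          intro d
          simp only [Bm, Matrix.of_apply]
          split_ifs <;> ring
        rw [Finset.sum_congr rfl (fun d _ => this d), Finset.sum_sub_distrib,
          Finset.sum_ite_eq' Finset.univ j]
        simp only [Finset.mem_univ, if_true]
        rw [hsum1 (finSumFinEquiv i)]
        ring
      | inr j =>
        simp only [Matrix.submatrix_apply, Matrix.fromBlocks_apply₁₂, Matrix.fromBlocks_apply₂₂,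
          Matrix.zero_apply, mul_zero, Finset.sum_const_zero, zero_add]
        have hX : ∀ d : Fin l, Small (finSumFinEquiv i) (finSumFinEquiv (Sum.inr d)) =
            τv d.succ (finSumFinEquiv i) - τv 0 (finSumFinEquiv i) := by
          intro d
          simp only [Small, finSumFinEquiv_apply_right, Matrix.of_apply]
          rw [dif_neg (by simp [Fin.coe_natAdd] : ¬ ((Fin.natAdd k d : Fin (k+l)):ℕ) < k)]
          congr 2 <;> simp [Fin.ext_iff]
        have hC : Cm k l σv τv p (finSumFinEquiv i) (finSumFinEquiv (Sum.inr j)) =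
            τv j.succ (finSumFinEquiv i) - p (finSumFinEquiv i) := by
          simp only [Cm, finSumFinEquiv_apply_right, Matrix.of_apply]
          rw [dif_neg (by simp [Fin.coe_natAdd] : ¬ ((Fin.natAdd k j : Fin (k+l)):ℕ) < k)]
          congr 2 <;> simp [Fin.ext_iff]
        rw [hC, Finset.sum_congr rfl (fun d _ => by rw [hX d])]
        have : ∀ d : Fin l,
            (τv d.succ (finSumFinEquiv i) - τv 0 (finSumFinEquiv i)) * Bm b d j =
            (if d = j then τv d.succ (finSumFinEquiv i) - τv 0 (finSumFinEquiv i) else 0)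
              - b d * (τv d.succ (finSumFinEquiv i) - τv 0 (finSumFinEquiv i)) := by
          intro d
          simp only [Bm, Matrix.of_apply]
          split_ifs <;> ring
        rw [Finset.sum_congr rfl (fun d _ => this d), Finset.sum_sub_distrib,
          Finset.sum_ite_eq' Finset.univ j]
        simp only [Finset.mem_univ, if_true]
        rw [hsum2 (finSumFinEquiv i)]
        ring
    rw [hfact, Matrix.det_mul, Matrix.det_fromBlocks_zero₁₂, Bm_det, Bm_det]
  have hfinal : Big.det = Small.det * ((1 - ∑ i, a i) * (1 - ∑ j, b j)) := by
    rw [hBD, Matrix.det_mul, Um_det, mul_one, Dm_det, hCB]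
  rw [hfinal]
  exact sign_mul_pos' _ _ (mul_pos (by linarith) (by linarith))
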